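/- Let Σ be a finite alphabet and B a Boolean subalgebra of P(Σ*) closed under quotients, and let B⊕2 denote the Boolean subalgebra of P(Σ*) generated by B together with all languages LaΣ* for L ∈ B and a ∈ Σ. Then for any language K ⊆ Σ*: K ∈ B⊕2 if and only if K satisfies every ultrafilter equation in E(B⊕2), i.e., for every pair (μ, ν) ∈ E(B⊕2), K ∈ μ ⟺ K ∈ ν. -/

import Mathlib

/-- `B ⊆ P(Σ*)` is a Boolean subalgebra: it contains the top element and is closed
under complements and finite unions. -/
def IsBoolSubalg {A : Type*} (B : Set (Set (List A))) : Prop :=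
  Set.univ ∈ B ∧ (∀ L ∈ B, Lᶜ ∈ B) ∧ (∀ L ∈ B, ∀ L' ∈ B, L ∪ L' ∈ B)

/-- `B` is closed under left and right quotients by words. -/
def QuotClosed {A : Type*} (B : Set (Set (List A))) : Prop :=
  ∀ L ∈ B, ∀ w : List A,
    {u : List A | w ++ u ∈ L} ∈ B ∧ {u : List A | u ++ w ∈ L} ∈ B

/-- The sets belonging to the Boolean subalgebra of `P(α)` generated by `G`. -/
inductive GenBA {α : Type*} (G : Set (Set α)) : Set α → Prop
  | base {s : Set α} : s ∈ G → GenBA G s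
  | univ : GenBA G Set.univ
  | compl {s : Set α} : GenBA G s → GenBA G sᶜ
  | union {s t : Set α} : GenBA G s → GenBA G t → GenBA G (s ∪ t)

/-- The language `LaΣ* = {u·a·v : u ∈ L, v ∈ Σ*}`. -/
def LaStar {A : Type*} (L : Set (List A)) (a : A) : Set (List A) :=
  {x | ∃ u ∈ L, ∃ v : List A, x = u ++ [a] ++ v}

/-- `B ⊕ 2`: the Boolean subalgebra of `P(Σ*)` generated by `B` together with all the
languages `LaΣ*` for `L ∈ B` and `a ∈ Σ`. -/
def BPlusTwo {A : Type*} (B : Set (Set (List A))) : Set (Set (List A)) :=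
  {K | GenBA (B ∪ {S | ∃ L ∈ B, ∃ a : A, S = LaStar L a}) K}

/-- `Σ*⊗ℕ`: words with a marked position. -/
def WordPos (A : Type*) : Type _ := {p : List A × ℕ // p.2 < p.1.length}

/-- `f_a : Σ*⊗ℕ → Σ*` replaces the marked letter by `a`. -/
def fLetter {A : Type*} (a : A) (p : WordPos A) : List A := p.1.1.set p.1.2 a

/-- `f_r : Σ*⊗ℕ → Σ*` takes the prefix before the marked position. -/
def fPrefix {A : Type*} (p : WordPos A) : List A := p.1.1.take p.1.2

/-- The set `E(B⊕2)` of ultrafilter equations. -/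
def EqnSet {A : Type*} (B : Set (Set (List A))) :
    Set (Ultrafilter (List A) × Ultrafilter (List A)) :=
  {μν | (∀ L ∈ B, L ∈ μν.1 ↔ L ∈ μν.2) ∧
    (∀ (a : A) (γ : Ultrafilter (WordPos A)), μν.1 = γ.map (fLetter a) →
      ∃ δ : Ultrafilter (WordPos A), μν.2 = δ.map (fLetter a) ∧
        ∀ L ∈ B, L ∈ γ.map fPrefix ↔ L ∈ δ.map fPrefix) ∧
    (∀ (a : A) (δ : Ultrafilter (WordPos A)), μν.2 = δ.map (fLetter a) →
      ∃ γ : Ultrafilter (WordPos A), μν.1 = γ.map (fLetter a) ∧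
        ∀ L ∈ B, L ∈ γ.map fPrefix ↔ L ∈ δ.map fPrefix)}


section Aux

open Filter Set

variable {A : Type*}

/-- A word-with-position built from a decomposition `u ++ [a] ++ v`, marking the `a`. -/
def wpOf (u : List A) (a : A) (v : List A) : WordPos A :=
  ⟨(u ++ [a] ++ v, u.length), by simp⟩

lemma fLetter_wpOf (u : List A) (a : A) (v : List A) :
    fLetter a (wpOf u a v) = u ++ [a] ++ v := by
  show (u ++ [a] ++ v).set u.length a = u ++ [a] ++ v
  induction u with
  | nil => simp
  | cons b u ih => simpa using ih

lemma fPrefix_wpOf (u : List A) (a : A) (v : List A) :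
    fPrefix (wpOf u a v) = u := by
  show List.take u.length (u ++ [a] ++ v) = u
  rw [List.append_assoc]
  exact List.take_left

lemma prefix_preimage_subset (L : Set (List A)) (a : A) :
    fPrefix ⁻¹' L ⊆ fLetter a ⁻¹' (LaStar L a) := by
  rintro ⟨⟨w, i⟩, hi⟩ hp
  refine ⟨w.take i, hp, w.drop (i + 1), ?_⟩
  show w.set i a = w.take i ++ [a] ++ w.drop (i + 1)
  rw [List.set_eq_take_cons_drop a hi]
  simp

lemma laStar_mem_of {L : Set (List A)} {a : A} {μ : Ultrafilter (List A)}
    {γ : Ultrafilter (WordPos A)} (hμ : μ = γ.map (fLetter a))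
    (hL : L ∈ γ.map fPrefix) : LaStar L a ∈ μ := by
  subst hμ
  rw [Ultrafilter.mem_map] at hL ⊢
  exact mem_of_superset hL (prefix_preimage_subset L a)

lemma exists_gamma {L : Set (List A)} {a : A} {μ : Ultrafilter (List A)}
    (h : LaStar L a ∈ μ) :
    ∃ γ : Ultrafilter (WordPos A), μ = γ.map (fLetter a) ∧ L ∈ γ.map fPrefix := by
  classical
  obtain ⟨x₀, u₀, hu₀, v₀, hx₀⟩ := Ultrafilter.nonempty_of_mem h
  have hw : ∀ x ∈ LaStar L a, ∃ p : WordPos A, fLetter a p = x ∧ fPrefix p ∈ L := by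
    rintro x ⟨u, hu, v, rfl⟩
    exact ⟨wpOf u a v, fLetter_wpOf u a v, by rw [fPrefix_wpOf]; exact hu⟩
  haveI : Nonempty (WordPos A) := ⟨wpOf u₀ a v₀⟩
  choose! g hg1 hg2 using hw
  refine ⟨μ.map g, ?_, ?_⟩
  · ext S
    rw [Ultrafilter.mem_map, Ultrafilter.mem_map]
    constructor
    · intro hS
      refine mem_of_superset (inter_mem hS h) ?_
      rintro x ⟨hxS, hx⟩
      show fLetter a (g x) ∈ S
      rw [hg1 x hx]; exact hxS
    · intro hS
      refine mem_of_superset (inter_mem hS h) ?_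
      rintro x ⟨hxS, hx⟩
      have : fLetter a (g x) ∈ S := hxS
      rwa [hg1 x hx] at this
  · rw [Ultrafilter.mem_map, Ultrafilter.mem_map]
    exact mem_of_superset h fun x hx => hg2 x hx

variable {X : Type*}

lemma sInter_mem_alg {C : Set (Set X)} (hu : Set.univ ∈ C)
    (hc : ∀ L ∈ C, Lᶜ ∈ C) (hun : ∀ L ∈ C, ∀ L' ∈ C, L ∪ L' ∈ C)
    {t : Set (Set X)} (ht : t.Finite) (hsub : t ⊆ C) : ⋂₀ t ∈ C := by
  have hint : ∀ L ∈ C, ∀ L' ∈ C, L ∩ L' ∈ C := by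
    intro L hL L' hL'
    have h2 := hc _ (hun _ (hc _ hL) _ (hc _ hL'))
    rwa [compl_union, compl_compl, compl_compl] at h2
  induction t, ht using Set.Finite.induction_on with
  | empty => simpa using hu
  | insert _ _ ih =>
    rename_i s hs _ _
    rw [sInter_insert]
    exact hint _ (hsub (mem_insert _ _)) _ (ih fun x hx => hsub (mem_insert_of_mem _ hx))

lemma sUnion_mem_alg {C : Set (Set X)} (hu : Set.univ ∈ C)
    (hc : ∀ L ∈ C, Lᶜ ∈ C) (hun : ∀ L ∈ C, ∀ L' ∈ C, L ∪ L' ∈ C)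
    {t : Set (Set X)} (ht : t.Finite) (hsub : t ⊆ C) : ⋃₀ t ∈ C := by
  induction t, ht using Set.Finite.induction_on with
  | empty => simpa using (compl_univ (α := X) ▸ hc _ hu)
  | insert _ _ ih =>
    rename_i s hs _ _
    rw [sUnion_insert]
    exact hun _ (hsub (mem_insert _ _)) _ (ih fun x hx => hsub (mem_insert_of_mem _ hx))

/-- General Stone-duality fact: membership in a Boolean subalgebra of `P(X)` is
characterised by invariance under ultrafilter pairs agreeing on the subalgebra. -/
lemma mem_of_forall_agree {C : Set (Set X)} (hu : Set.univ ∈ C)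
    (hc : ∀ L ∈ C, Lᶜ ∈ C) (hun : ∀ L ∈ C, ∀ L' ∈ C, L ∪ L' ∈ C) {K : Set X}
    (h : ∀ μ ν : Ultrafilter X, (∀ L ∈ C, (L ∈ μ ↔ L ∈ ν)) → (K ∈ μ ↔ K ∈ ν)) :
    K ∈ C := by
  classical
  -- Step 1: every ultrafilter containing K contains some L ∈ C with L ⊆ K.
  have step1 : ∀ μ : Ultrafilter X, K ∈ μ → ∃ L ∈ C, L ∈ μ ∧ L ⊆ K := by
    intro μ hK
    by_contra hcon
    push_neg at hcon
    have hFne : (Filter.generate (C ∩ {L | L ∈ μ}) ⊓ Filter.principal Kᶜ).NeBot := by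
      rw [← Filter.forall_mem_nonempty_iff_neBot]
      intro s hs
      rw [Filter.mem_inf_principal, Filter.mem_generate_iff] at hs
      obtain ⟨t, htsub, htfin, ht⟩ := hs
      have h1 : ⋂₀ t ∈ C :=
        sInter_mem_alg hu hc hun htfin (htsub.trans inter_subset_left)
      have h2 : ⋂₀ t ∈ μ :=
        Ultrafilter.mem_coe.1 ((Filter.sInter_mem (f := ↑μ) htfin).2
          fun U hU => Ultrafilter.mem_coe.2 (htsub hU).2)
      obtain ⟨x, hx1, hx2⟩ := not_subset.1 (hcon _ h1 h2)
      exact ⟨x, ht hx1 hx2⟩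
    haveI := hFne
    obtain ⟨ν, hν⟩ :=
      Ultrafilter.exists_le (Filter.generate (C ∩ {L | L ∈ μ}) ⊓ Filter.principal Kᶜ)
    have hmem : ∀ M ∈ C, M ∈ μ → M ∈ ν := fun M hM hMμ =>
      hν (Filter.mem_inf_of_left (Filter.mem_generate_of_mem ⟨hM, hMμ⟩))
    have hagree : ∀ L ∈ C, (L ∈ μ ↔ L ∈ ν) := by
      intro L hL
      refine ⟨hmem L hL, fun hLν => ?_⟩
      by_contra hLμ
      have h2 := hmem Lᶜ (hc L hL) (Ultrafilter.compl_mem_iff_notMem.2 hLμ)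
      exact Ultrafilter.compl_mem_iff_notMem.1 h2 hLν
    have hKν : K ∈ ν := (h μ ν hagree).1 hK
    have hKc : Kᶜ ∈ ν := hν (Filter.mem_inf_of_right (Filter.mem_principal_self _))
    exact Ultrafilter.compl_mem_iff_notMem.1 hKc hKν
  -- Step 2: finitely many such L cover K.
  set D : Set (Set X) := {L | L ∈ C ∧ L ⊆ K} with hD
  have hcov : ∃ t : Set (Set X), t.Finite ∧ t ⊆ D ∧ K ⊆ ⋃₀ t := by
    by_contra hcon
    push_neg at hcon
    have hFne : (Filter.principal K ⊓ Filter.generate (compl '' D)).NeBot := by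
      rw [← Filter.forall_mem_nonempty_iff_neBot]
      intro s hs
      rw [Filter.mem_inf_iff] at hs
      obtain ⟨t₁, ht₁, t₂, ht₂, rfl⟩ := hs
      rw [Filter.mem_generate_iff] at ht₂
      obtain ⟨r, hrsub, hrfin, hr⟩ := ht₂
      have hrt : r = compl '' (compl '' r) := by
        rw [compl_compl_image]
      have htD : compl '' r ⊆ D := by
        rintro _ ⟨M, hMr, rfl⟩
        obtain ⟨N, hN, rfl⟩ := hrsub hMr
        rwa [compl_compl]
      obtain ⟨x, hxK, hxt⟩ :=
        not_subset.1 (hcon (compl '' r) (hrfin.image _) htD)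
      refine ⟨x, Filter.mem_principal.1 ht₁ hxK, hr ?_⟩
      rw [hrt, ← compl_sUnion]
      exact hxt
    haveI := hFne
    obtain ⟨μ, hμ⟩ :=
      Ultrafilter.exists_le (Filter.principal K ⊓ Filter.generate (compl '' D))
    have hK : K ∈ μ := hμ (Filter.mem_inf_of_left (Filter.mem_principal_self K))
    obtain ⟨L, hLC, hLμ, hLK⟩ := step1 μ hK
    have hLc : Lᶜ ∈ μ :=
      hμ (Filter.mem_inf_of_right (Filter.mem_generate_of_mem ⟨L, ⟨hLC, hLK⟩, rfl⟩))
    exact Ultrafilter.compl_mem_iff_notMem.1 hLc hLμ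
  obtain ⟨t, htfin, htD, htcov⟩ := hcov
  have hKeq : K = ⋃₀ t :=
    Subset.antisymm htcov (sUnion_subset fun L hL => (htD hL).2)
  rw [hKeq]
  exact sUnion_mem_alg hu hc hun htfin fun L hL => (htD hL).1

/-- Key construction for the completeness direction: ultrafilters agreeing on `B ⊕ 2`
satisfy the second (and by symmetry third) condition of `EqnSet`. -/
lemma exists_delta {B : Set (Set (List A))} (hB : IsBoolSubalg B)
    {μ ν : Ultrafilter (List A)}
    (hagree : ∀ L ∈ BPlusTwo B, (L ∈ μ ↔ L ∈ ν))
    (a : A) (γ : Ultrafilter (WordPos A)) (hγ : μ = γ.map (fLetter a)) :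
    ∃ δ : Ultrafilter (WordPos A), ν = δ.map (fLetter a) ∧
      ∀ L ∈ B, (L ∈ γ.map fPrefix ↔ L ∈ δ.map fPrefix) := by
  classical
  obtain ⟨hBu, hBc, hBun⟩ := hB
  set S0 : Set (Set (List A)) := B ∩ {L | L ∈ γ.map fPrefix} with hS0def
  set F : Filter (WordPos A) :=
    Filter.comap (fLetter a) ↑ν ⊓ Filter.comap fPrefix (Filter.generate S0) with hFdef
  have hS0 : ∀ t : Set (Set (List A)), t.Finite → t ⊆ S0 → ⋂₀ t ∈ S0 := by
    intro t htfin htsub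
    constructor
    · exact sInter_mem_alg hBu hBc hBun htfin (htsub.trans inter_subset_left)
    · exact Ultrafilter.mem_coe.1 ((Filter.sInter_mem (f := ↑(γ.map fPrefix)) htfin).2
        fun U hU => Ultrafilter.mem_coe.2 (htsub hU).2)
  have hne : F.NeBot := by
    rw [← Filter.forall_mem_nonempty_iff_neBot]
    intro s hs
    rw [hFdef, Filter.mem_inf_iff] at hs
    obtain ⟨t₁, ht₁, t₂, ht₂, rfl⟩ := hs
    obtain ⟨S, hSν, hSsub⟩ := Filter.mem_comap.1 ht₁
    obtain ⟨T, hT, hTsub⟩ := Filter.mem_comap.1 ht₂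
    rw [Filter.mem_generate_iff] at hT
    obtain ⟨r, hrsub, hrfin, hr⟩ := hT
    obtain ⟨hLB, hLγ⟩ := hS0 r hrfin hrsub
    have hLa : LaStar (⋂₀ r) a ∈ ν := by
      refine (hagree _ ?_).1 (laStar_mem_of hγ hLγ)
      exact GenBA.base (Or.inr ⟨⋂₀ r, hLB, a, rfl⟩)
    obtain ⟨x, hxS, u, huL, v, hxuv⟩ := Ultrafilter.nonempty_of_mem (inter_mem hSν hLa)
    refine ⟨wpOf u a v, hSsub ?_, hTsub ?_⟩
    · show fLetter a (wpOf u a v) ∈ S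
      rw [fLetter_wpOf, ← hxuv]; exact hxS
    · show fPrefix (wpOf u a v) ∈ T
      rw [fPrefix_wpOf]; exact hr huL
  obtain ⟨δ, hδ⟩ := Ultrafilter.exists_le F
  have h1 : ν = δ.map (fLetter a) := by
    have hle : Filter.map (fLetter a) ↑δ ≤ ↑ν :=
      Filter.map_le_iff_le_comap.2 (hδ.trans inf_le_left)
    have := ν.unique hle
    exact Ultrafilter.coe_injective this.symm
  have fwd : ∀ M ∈ B, M ∈ γ.map fPrefix → M ∈ δ.map fPrefix := by
    intro M hM hMγ
    rw [Ultrafilter.mem_map]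
    exact hδ (Filter.mem_inf_of_right
      (Filter.preimage_mem_comap (Filter.mem_generate_of_mem ⟨hM, hMγ⟩)))
  refine ⟨δ, h1, fun L hL => ⟨fwd L hL, fun hLδ => ?_⟩⟩
  by_contra hLγ
  have h2 := fwd Lᶜ (hBc L hL) (Ultrafilter.compl_mem_iff_notMem.2 hLγ)
  exact Ultrafilter.compl_mem_iff_notMem.1 h2 hLδ

/-- Soundness: every language of `B ⊕ 2` satisfies every equation of `EqnSet B`. -/
lemma agree_of_eqn {B : Set (Set (List A))}
    {μν : Ultrafilter (List A) × Ultrafilter (List A)} (h : μν ∈ EqnSet B) :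
    ∀ K ∈ BPlusTwo B, (K ∈ μν.1 ↔ K ∈ μν.2) := by
  obtain ⟨h1, h2, h3⟩ := h
  intro K hK
  induction hK with
  | base hs =>
    rcases hs with hs | ⟨L, hL, a, rfl⟩
    · exact h1 _ hs
    · constructor
      · intro hμ
        obtain ⟨γ, hγ, hLγ⟩ := exists_gamma hμ
        obtain ⟨δ, hδ, hiff⟩ := h2 a γ hγ
        exact laStar_mem_of hδ ((hiff L hL).1 hLγ)
      · intro hν
        obtain ⟨δ, hδ, hLδ⟩ := exists_gamma hν
        obtain ⟨γ, hγ, hiff⟩ := h3 a δ hδ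
        exact laStar_mem_of hγ ((hiff L hL).2 hLδ)
  | univ => exact iff_of_true Filter.univ_mem Filter.univ_mem
  | compl _ ih =>
    rw [Ultrafilter.compl_mem_iff_notMem, Ultrafilter.compl_mem_iff_notMem, ih]
  | union _ _ ih ih' =>
    rw [Ultrafilter.union_mem_iff, Ultrafilter.union_mem_iff, ih, ih']

end Aux


/-- Completeness: a language belongs to `B⊕2` if and only if it satisfies every
ultrafilter equation in `E(B⊕2)`. -/
theorem stmt18 {A : Type*} [Fintype A] (B : Set (Set (List A)))
    (hB : IsBoolSubalg B) (hq : QuotClosed B) (K : Set (List A)) :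
    K ∈ BPlusTwo B ↔ ∀ μν ∈ EqnSet B, (K ∈ μν.1 ↔ K ∈ μν.2) := by
  constructor
  · intro hK μν hμν
    exact agree_of_eqn hμν K hK
  · intro h
    refine mem_of_forall_agree (GenBA.univ) (fun L hL => GenBA.compl hL)
      (fun L hL L' hL' => GenBA.union hL hL') ?_
    intro μ ν hagree
    refine h (μ, ν) ⟨fun L hL => hagree L (GenBA.base (Or.inl hL)),
      fun a γ hγ => exists_delta hB hagree a γ hγ,
      fun a δ hδ => ?_⟩
    obtain ⟨γ, hγ, hiff⟩ :=
      exists_delta hB (fun L hL => (hagree L hL).symm) a δ hδ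
    exact ⟨γ, hγ, fun L hL => (hiff L hL).symm⟩
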